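/- Let U be a unitary on ℂ^a ⊗ ℂ^b (systems AB) and σ a density matrix on ℂ^b such that U commutes with I_a ⊗ σ. Let |Γ⟩ = ∑_{k} e_k ⊗ e_k ∈ ℂ^b ⊗ ℂ^b and let σ_{BC} = (√σ ⊗ I_b)|Γ⟩⟨Γ|(√σ ⊗ I_b) be the standard purification of σ on systems BC, where √σ is the positive semidefinite square root of σ. Define the operator V on ℂ^a ⊗ ℂ^b ⊗ ℂ^b acting as the identity on the middle (B) factor and as the partial transpose of U over its second index on the A and C factors; explicitly, V has entries V_{(i,k,m),(j,l,n)} = δ_{k,l} U_{(i,n),(j,m)}. Then for every complex a×a matrix κ: (U ⊗ I_b)(κ ⊗ σ_{BC})(U ⊗ I_b)† = V(κ ⊗ σ_{BC})V†. (The partial transpose of a catalysis unitary acts on AC as the recovery map of the information encoded by U into the correlation of AB.) -/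

import Mathlib

open scoped Matrix Kronecker BigOperators Classical ComplexOrder

/-- A density matrix: positive semidefinite with unit trace. -/
noncomputable def IsDensity {n : Type*} [Fintype n] (ρ : Matrix n n ℂ) : Prop :=
  ρ.PosSemidef ∧ ρ.trace = 1

/-- A unitary matrix. -/
noncomputable def IsUnitary {n : Type*} [Fintype n] [DecidableEq n] (U : Matrix n n ℂ) : Prop :=
  U * Uᴴ = 1 ∧ Uᴴ * U = 1

/-- Partial trace over the first tensor factor. -/
noncomputable def trFst {α β : Type*} [Fintype α] (M : Matrix (α × β) (α × β) ℂ) : Matrix β β ℂ :=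
  Matrix.of fun k l => ∑ i, M (i, k) (i, l)

/-- Partial trace over the second tensor factor. -/
noncomputable def trSnd {α β : Type*} [Fintype β] (M : Matrix (α × β) (α × β) ℂ) : Matrix α α ℂ :=
  Matrix.of fun i j => ∑ k, M (i, k) (j, k)

/-- Partial trace over the third factor of a tripartite system. -/
noncomputable def trThird {α β γ : Type*} [Fintype γ] (M : Matrix (α × β × γ) (α × β × γ) ℂ) :
    Matrix (α × β) (α × β) ℂ :=
  Matrix.of fun p q => ∑ k, M (p.1, p.2, k) (q.1, q.2, k)

/-- von Neumann entropy (base-2), with the convention `0 log 0 = 0`. -/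
noncomputable def vnEntropy {n : Type*} [Fintype n] [DecidableEq n] (ρ : Matrix n n ℂ) : ℝ :=
  if h : ρ.IsHermitian then -∑ i, h.eigenvalues i * Real.logb 2 (h.eigenvalues i) else 0

/-- Largest eigenvalue of a (Hermitian) matrix. -/
noncomputable def maxEig {n : Type*} [Fintype n] [DecidableEq n] (ρ : Matrix n n ℂ) : ℝ :=
  if h : ρ.IsHermitian then ⨆ i, h.eigenvalues i else 0

/-- Min-entropy of a density matrix. -/
noncomputable def minEntropy {n : Type*} [Fintype n] [DecidableEq n] (ρ : Matrix n n ℂ) : ℝ :=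
  -Real.logb 2 (maxEig ρ)

/-- Rényi entropy of order `α` (base 2). -/
noncomputable def renyiEntropy {n : Type*} [Fintype n] [DecidableEq n] (α : ℝ)
    (ρ : Matrix n n ℂ) : ℝ :=
  if h : ρ.IsHermitian then (1 - α)⁻¹ * Real.logb 2 (∑ i, h.eigenvalues i ^ α) else 0

/-- Partial transpose over the first tensor factor. -/
noncomputable def ptFst {α β : Type*} (U : Matrix (α × β) (α × β) ℂ) : Matrix (α × β) (α × β) ℂ :=
  Matrix.of fun p q => U (q.1, p.2) (p.1, q.2)

/-- Swap the two parties of a bipartite matrix. -/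
noncomputable def swapParties {α β : Type*} (U : Matrix (α × β) (α × β) ℂ) : Matrix (β × α) (β × α) ℂ :=
  Matrix.of fun p q => U (p.2, p.1) (q.2, q.1)

/-- `U` is compatible with the catalyst `σ`: there is a unitary `V` on `B` such that
`Tr_A (U (ρ ⊗ σ) U†) = V σ V†` for every density matrix `ρ` on `A`. -/
noncomputable def Compatible {dA dB : ℕ} (U : Matrix (Fin dA × Fin dB) (Fin dA × Fin dB) ℂ)
    (σ : Matrix (Fin dB) (Fin dB) ℂ) : Prop :=
  ∃ V : Matrix (Fin dB) (Fin dB) ℂ, IsUnitary V ∧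
    ∀ ρ : Matrix (Fin dA) (Fin dA) ℂ, IsDensity ρ →
      trFst (U * (ρ ⊗ₖ σ) * Uᴴ) = V * σ * Vᴴ

/-- The unitary `1_m ⊗ U` on `ℂ^m ⊗ ℂ^{dA} ⊗ ℂ^{dB}`, indexed as `(Fin m × Fin dA) × Fin dB`. -/
noncomputable def extUnitary {m dA dB : ℕ} (U : Matrix (Fin dA × Fin dB) (Fin dA × Fin dB) ℂ) :
    Matrix ((Fin m × Fin dA) × Fin dB) ((Fin m × Fin dA) × Fin dB) ℂ :=
  Matrix.of fun p q => if p.1.1 = q.1.1 then U (p.1.2, p.2) (q.1.2, q.2) else 0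

/-- The positive semidefinite square root (the definition removed from Mathlib, restored). -/
noncomputable def Matrix.PosSemidef.sqrt {n : Type*} [Fintype n] [DecidableEq n]
    {A : Matrix n n ℂ} (hA : A.PosSemidef) : Matrix n n ℂ :=
  hA.1.eigenvectorUnitary.1 * Matrix.diagonal ((↑) ∘ (√·) ∘ hA.1.eigenvalues) *
    (star hA.1.eigenvectorUnitary : Matrix n n ℂ)

open scoped MatrixOrder in
theorem Matrix.PosSemidef.sqrt_eq_cfc_sqrt {n : Type*} [Fintype n] [DecidableEq n]
    {A : Matrix n n ℂ} (hA : A.PosSemidef) : hA.sqrt = CFC.sqrt A := by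
  unfold Matrix.PosSemidef.sqrt
  rw [CFC.sqrt_eq_cfc, cfc_nnreal_eq_real _ A, hA.1.cfc_eq, Matrix.IsHermitian.cfc,
    Unitary.conjStarAlgAut_apply]
  have hx : ∀ x : ℝ, ((NNReal.sqrt x.toNNReal : ℝ)) = √x := fun x => (Real.sqrt.eq_1 x).symm
  simp only [hx]
  rfl

open scoped MatrixOrder in
theorem Matrix.PosSemidef.posSemidef_sqrt {n : Type*} [Fintype n] [DecidableEq n]
    {A : Matrix n n ℂ} (hA : A.PosSemidef) : hA.sqrt.PosSemidef := by
  rw [hA.sqrt_eq_cfc_sqrt]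
  exact Matrix.nonneg_iff_posSemidef.mp (CFC.sqrt_nonneg A)

open scoped MatrixOrder in
theorem Matrix.PosSemidef.sqrt_mul_self {n : Type*} [Fintype n] [DecidableEq n]
    {A : Matrix n n ℂ} (hA : A.PosSemidef) : hA.sqrt * hA.sqrt = A := by
  rw [hA.sqrt_eq_cfc_sqrt]
  exact CFC.sqrt_mul_sqrt_self A hA.nonneg

open scoped MatrixOrder in
theorem Matrix.PosSemidef.eq_sqrt_of_sq_eq {n : Type*} [Fintype n] [DecidableEq n]
    {A B : Matrix n n ℂ} (hA : A.PosSemidef) (hB : B.PosSemidef) (hAB : A ^ 2 = B) :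
    A = hB.sqrt := by
  rw [hB.sqrt_eq_cfc_sqrt]
  exact (CFC.sqrt_unique (by rw [← sq]; exact hAB) hA.nonneg).symm

/-- The partial transpose of a catalysis unitary acts on `AC` as the recovery map of the
information encoded by `U` into the correlation of `AB`. -/
theorem stmt19 {a b : ℕ} (U : Matrix (Fin a × Fin b) (Fin a × Fin b) ℂ) (hU : IsUnitary U)
    (σ : Matrix (Fin b) (Fin b) ℂ) (hσ : IsDensity σ)
    (hcomm : U * ((1 : Matrix (Fin a) (Fin a) ℂ) ⊗ₖ σ) =
      ((1 : Matrix (Fin a) (Fin a) ℂ) ⊗ₖ σ) * U)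
    (σBC : Matrix (Fin b × Fin b) (Fin b × Fin b) ℂ)
    (hσBC : σBC = (hσ.1.sqrt ⊗ₖ (1 : Matrix (Fin b) (Fin b) ℂ)) *
        (Matrix.of fun p q : Fin b × Fin b =>
          (if p.1 = p.2 then (1 : ℂ) else 0) * (if q.1 = q.2 then 1 else 0)) *
        (hσ.1.sqrt ⊗ₖ (1 : Matrix (Fin b) (Fin b) ℂ)))
    (UI : Matrix (Fin a × Fin b × Fin b) (Fin a × Fin b × Fin b) ℂ)
    (hUI : ∀ p q : Fin a × Fin b × Fin b,
      UI p q = U (p.1, p.2.1) (q.1, q.2.1) * (if p.2.2 = q.2.2 then 1 else 0))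
    (V : Matrix (Fin a × Fin b × Fin b) (Fin a × Fin b × Fin b) ℂ)
    (hV : ∀ p q : Fin a × Fin b × Fin b,
      V p q = (if p.2.1 = q.2.1 then (1 : ℂ) else 0) * U (p.1, q.2.2) (q.1, p.2.2)) :
    ∀ κ : Matrix (Fin a) (Fin a) ℂ,
      UI * (κ ⊗ₖ σBC) * UIᴴ = V * (κ ⊗ₖ σBC) * Vᴴ := by
  intro κ
  set s := hσ.1.sqrt with hs_def
  have hH : sᴴ = s := hσ.1.posSemidef_sqrt.1
  have hs : ∀ x y, (starRingEnd ℂ) (s x y) = s y x := by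
    intro x y
    rw [starRingEnd_apply, ← Matrix.conjTranspose_apply, hH]
  -- entries of σBC
  have hσe : ∀ k m l n : Fin b, σBC (k, m) (l, n) = s k m * s n l := by
    intro k m l n
    rw [hσBC]
    simp [Matrix.mul_apply, Matrix.kroneckerMap_apply, Matrix.one_apply, Fintype.sum_prod_type,
      mul_ite, ite_mul, mul_zero, zero_mul, Finset.sum_ite_eq, Finset.sum_ite_eq', mul_comm]
  -- U commutes with 1 ⊗ √σ
  have hT : ((1 : Matrix (Fin a) (Fin a) ℂ) ⊗ₖ s).PosSemidef := by
    obtain ⟨C, hC⟩ : ∃ C : Matrix (Fin b) (Fin b) ℂ, s = Cᴴ * C :=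
      ⟨hσ.1.posSemidef_sqrt.sqrt, by
        rw [hσ.1.posSemidef_sqrt.posSemidef_sqrt.1.eq, hσ.1.posSemidef_sqrt.sqrt_mul_self]⟩
    have h1 : ((1 : Matrix (Fin a) (Fin a) ℂ) ⊗ₖ C)ᴴ = (1 : Matrix (Fin a) (Fin a) ℂ) ⊗ₖ Cᴴ := by
      ext ⟨i,k⟩ ⟨j,l⟩
      simp [Matrix.conjTranspose_apply, Matrix.kroneckerMap_apply, Matrix.one_apply, eq_comm,
        apply_ite (starRingEnd ℂ)]
    have h2 : (1 : Matrix (Fin a) (Fin a) ℂ) ⊗ₖ s =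
        ((1 : Matrix (Fin a) (Fin a) ℂ) ⊗ₖ C)ᴴ * ((1 : Matrix (Fin a) (Fin a) ℂ) ⊗ₖ C) := by
      rw [h1, ← Matrix.mul_kronecker_mul, Matrix.one_mul, ← hC]
    rw [h2]
    exact Matrix.posSemidef_conjTranspose_mul_self _
  have hsq : ((1 : Matrix (Fin a) (Fin a) ℂ) ⊗ₖ s) ^ 2 = (1 : Matrix (Fin a) (Fin a) ℂ) ⊗ₖ σ := by
    rw [pow_two, ← Matrix.mul_kronecker_mul, Matrix.one_mul, hσ.1.sqrt_mul_self]
  have hTσ : ((1 : Matrix (Fin a) (Fin a) ℂ) ⊗ₖ σ).PosSemidef := hsq ▸ (hT.pow 2)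
  have hA : (U * ((1 : Matrix (Fin a) (Fin a) ℂ) ⊗ₖ s) * Uᴴ).PosSemidef :=
    hT.mul_mul_conjTranspose_same U
  have hA2 : (U * ((1 : Matrix (Fin a) (Fin a) ℂ) ⊗ₖ s) * Uᴴ) ^ 2 =
      (1 : Matrix (Fin a) (Fin a) ℂ) ⊗ₖ σ := by
    rw [pow_two]
    calc (U * ((1:Matrix (Fin a) (Fin a) ℂ) ⊗ₖ s) * Uᴴ) * (U * ((1:Matrix (Fin a) (Fin a) ℂ) ⊗ₖ s) * Uᴴ)
        = U * ((1:Matrix (Fin a) (Fin a) ℂ) ⊗ₖ s) * (Uᴴ * U) * ((1:Matrix (Fin a) (Fin a) ℂ) ⊗ₖ s) * Uᴴ := by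
          noncomm_ring
      _ = U * (((1:Matrix (Fin a) (Fin a) ℂ) ⊗ₖ s) * ((1:Matrix (Fin a) (Fin a) ℂ) ⊗ₖ s)) * Uᴴ := by
          rw [hU.2]; noncomm_ring
      _ = ((1:Matrix (Fin a) (Fin a) ℂ) ⊗ₖ σ) * (U * Uᴴ) := by
          rw [← pow_two, hsq, ← Matrix.mul_assoc, hcomm, Matrix.mul_assoc]
      _ = (1:Matrix (Fin a) (Fin a) ℂ) ⊗ₖ σ := by rw [hU.1, Matrix.mul_one]
  have h3 : U * ((1:Matrix (Fin a) (Fin a) ℂ) ⊗ₖ s) * Uᴴ = (1:Matrix (Fin a) (Fin a) ℂ) ⊗ₖ s :=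
    (hA.eq_sqrt_of_sq_eq hTσ hA2).trans (hT.eq_sqrt_of_sq_eq hTσ hsq).symm
  have hW : U * ((1:Matrix (Fin a) (Fin a) ℂ) ⊗ₖ s) = ((1:Matrix (Fin a) (Fin a) ℂ) ⊗ₖ s) * U := by
    calc U * ((1:Matrix (Fin a) (Fin a) ℂ) ⊗ₖ s)
        = U * ((1:Matrix (Fin a) (Fin a) ℂ) ⊗ₖ s) * (Uᴴ * U) := by rw [hU.2, Matrix.mul_one]
      _ = (U * ((1:Matrix (Fin a) (Fin a) ℂ) ⊗ₖ s) * Uᴴ) * U := by noncomm_ring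
      _ = ((1:Matrix (Fin a) (Fin a) ℂ) ⊗ₖ s) * U := by rw [h3]
  -- entrywise comparison
  ext ⟨i, k, m⟩ ⟨j, l, n⟩
  have key1 : (UI * (κ ⊗ₖ σBC) * UIᴴ) (i, k, m) (j, l, n) =
      ∑ i', ∑ j', (U * ((1 : Matrix (Fin a) (Fin a) ℂ) ⊗ₖ s)) (i, k) (i', m) * κ i' j' *
        (starRingEnd ℂ) ((U * ((1 : Matrix (Fin a) (Fin a) ℂ) ⊗ₖ s)) (j, l) (j', n)) := by
    simp only [Matrix.mul_apply, Matrix.conjTranspose_apply, hUI, Matrix.kroneckerMap_apply,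
      Matrix.one_apply, Fintype.sum_prod_type]
    simp only [hσe, mul_ite, ite_mul, mul_zero, zero_mul, mul_one, one_mul,
      Finset.sum_ite_eq, Finset.sum_ite_eq', Finset.mem_univ, if_true, map_mul, map_sum,
      Finset.sum_mul, Finset.mul_sum, hs, apply_ite (starRingEnd ℂ), map_one, map_zero,
      apply_ite (star : ℂ → ℂ), star_zero, Finset.sum_ite_irrel, Finset.sum_const_zero]
    simp only [starRingEnd_apply]
    conv_lhs => enter [2, A]; rw [Finset.sum_comm]
    conv_lhs => rw [Finset.sum_comm]
    refine Finset.sum_congr rfl fun C _ => ?_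
    refine Finset.sum_congr rfl fun A _ => ?_
    refine Finset.sum_congr rfl fun B _ => ?_
    refine Finset.sum_congr rfl fun D _ => ?_
    ring
  have key2 : (V * (κ ⊗ₖ σBC) * Vᴴ) (i, k, m) (j, l, n) =
      ∑ i', ∑ j', (((1 : Matrix (Fin a) (Fin a) ℂ) ⊗ₖ s) * U) (i, k) (i', m) * κ i' j' *
        (starRingEnd ℂ) ((((1 : Matrix (Fin a) (Fin a) ℂ) ⊗ₖ s) * U) (j, l) (j', n)) := by
    simp only [Matrix.mul_apply, Matrix.conjTranspose_apply, hV, Matrix.kroneckerMap_apply,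
      Matrix.one_apply, Fintype.sum_prod_type]
    simp only [hσe, mul_ite, ite_mul, mul_zero, zero_mul, mul_one, one_mul,
      Finset.sum_ite_eq, Finset.sum_ite_eq', Finset.mem_univ, if_true, map_mul, map_sum,
      Finset.sum_mul, Finset.mul_sum, hs, apply_ite (starRingEnd ℂ), map_one, map_zero,
      apply_ite (star : ℂ → ℂ), star_zero, Finset.sum_ite_irrel, Finset.sum_const_zero]
    simp only [starRingEnd_apply]
    conv_lhs => enter [2, A]; rw [Finset.sum_comm]
    conv_lhs => rw [Finset.sum_comm]
    refine Finset.sum_congr rfl fun C _ => ?_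
    refine Finset.sum_congr rfl fun A _ => ?_
    refine Finset.sum_congr rfl fun B _ => ?_
    refine Finset.sum_congr rfl fun D _ => ?_
    ring
  rw [hW] at key1
  exact key1.trans key2.symm
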